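/- Suppose V ∈ L¹(ℝ) with ∫ (1+|t|)|V(t)| dt < ∞, and suppose m : ℝ → ℂ is a bounded continuous function on [x₀, ∞) satisfying the integral equation m(x) = 1 + ∫ₓ^∞ h(t−x, k) V(t) m(t) dt where |h(u,k)| ≤ u for u ≥ 0. Then sup_{x ≥ x₀} |m(x)| ≤ exp(∫_{x₀}^∞ (t − x₀)|V(t)| dt) holds, i.e., |m(x)| ≤ exp(∫ₓ^∞ (t−x)|V(t)| dt) for all x ≥ x₀. In particular, |m(x) − 1| ≤ C(1 + max(0, −x)) for a constant C depending on ∫(1+|t|)|V(t)|dt. -/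

import Mathlib

open MeasureTheory Set Filter intervalIntegral

namespace Stmt6Aux

noncomputable def Phi (ψ : ℝ → ℝ) (a : ℝ) : ℝ := ∫ t in Ioi a, ψ t
noncomputable def Jf (ψ : ℝ → ℝ) (a : ℝ) : ℝ := ∫ t in Ioi a, (t - a) * ψ t

structure Nice (ψ : ℝ → ℝ) : Prop where
  meas : AEStronglyMeasurable ψ volume
  nonneg : ∀ t, 0 ≤ ψ t
  int1 : Integrable (fun t => (1 + |t|) * ψ t)

variable {ψ : ℝ → ℝ} {a b x : ℝ}

lemma Nice.integrable (hψ : Nice ψ) : Integrable ψ := by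
  refine hψ.int1.mono' hψ.meas (Eventually.of_forall fun t => ?_)
  rw [Real.norm_eq_abs, abs_of_nonneg (hψ.nonneg t)]
  nlinarith [abs_nonneg t, hψ.nonneg t]

lemma Nice.int_lin (hψ : Nice ψ) (x : ℝ) :
    IntegrableOn (fun t => (t - x) * ψ t) (Ioi x) volume := by
  refine ((hψ.int1.restrict (s := Ioi x)).const_mul (1 + |x|)).mono'
    (((continuous_id.sub continuous_const).aestronglyMeasurable.mul hψ.meas).restrict)
    (ae_restrict_of_forall_mem measurableSet_Ioi fun t ht => ?_)
  have ht' : x < t := ht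
  have h1 : 0 ≤ t - x := by linarith
  rw [Real.norm_eq_abs, abs_of_nonneg (mul_nonneg h1 (hψ.nonneg t))]
  nlinarith [le_abs_self t, neg_le_abs x, abs_nonneg t, abs_nonneg x, hψ.nonneg t,
    mul_nonneg (abs_nonneg x) (mul_nonneg (abs_nonneg t) (hψ.nonneg t))]

lemma split {u : ℝ → ℝ} (hu : IntegrableOn u (Ioi a) volume) (hab : a ≤ b) :
    ∫ t in Ioi a, u t = (∫ t in Ioc a b, u t) + ∫ t in Ioi b, u t := by
  rw [← setIntegral_union (Ioc_disjoint_Ioi le_rfl) measurableSet_Ioi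
    (hu.mono_set Ioc_subset_Ioi_self) (hu.mono_set (Ioi_subset_Ioi hab)),
    Ioc_union_Ioi_eq_Ioi hab]

lemma Phi_nonneg (hψ : Nice ψ) (a : ℝ) : 0 ≤ Phi ψ a :=
  setIntegral_nonneg measurableSet_Ioi fun t _ => hψ.nonneg t

lemma Phi_diff (hψ : Nice ψ) (hab : a ≤ b) :
    Phi ψ a - Phi ψ b = ∫ t in Ioc a b, ψ t := by
  rw [Phi, Phi, split hψ.integrable.integrableOn hab]; ring

lemma Phi_anti (hψ : Nice ψ) : Antitone (Phi ψ) := fun a b hab => by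
  have h1 := Phi_diff hψ hab
  have h2 : 0 ≤ ∫ t in Ioc a b, ψ t :=
    setIntegral_nonneg measurableSet_Ioc fun t _ => hψ.nonneg t
  linarith

lemma Phi_cont (hψ : Nice ψ) : Continuous (Phi ψ) := by
  have hInt : ∀ a b : ℝ, IntervalIntegrable ψ volume a b := fun a b =>
    hψ.integrable.intervalIntegrable
  have key : ∀ y : ℝ, Phi ψ y = Phi ψ 0 - ∫ t in (0:ℝ)..y, ψ t := by
    intro y
    rcases le_total 0 y with hy | hy
    · rw [integral_of_le hy, ← Phi_diff hψ hy]; ring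
    · rw [show (∫ t in (0:ℝ)..y, ψ t) = -∫ t in Ioc y 0, ψ t by
        rw [← integral_of_le hy, ← intervalIntegral.integral_symm], ← Phi_diff hψ hy]
      ring
  exact (continuous_const.sub (intervalIntegral.continuous_primitive hInt 0)).congr
    fun y => (key y).symm

lemma Jf_nonneg (hψ : Nice ψ) (a : ℝ) : 0 ≤ Jf ψ a :=
  setIntegral_nonneg measurableSet_Ioi fun t ht =>
    mul_nonneg (by simp only [mem_Ioi] at ht; linarith) (hψ.nonneg t)

lemma Jf_sub (hψ : Nice ψ) (hab : a ≤ b) :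
    Jf ψ a - Jf ψ b = (∫ t in Ioc a b, (t - a) * ψ t) + (b - a) * Phi ψ b := by
  have h2 : IntegrableOn (fun t => (t - b) * ψ t) (Ioi b) volume := hψ.int_lin b
  have h3 : IntegrableOn ψ (Ioi b) volume := hψ.integrable.integrableOn
  have h4 : ∫ t in Ioi b, (t - a) * ψ t
      = (∫ t in Ioi b, (t - b) * ψ t) + (b - a) * ∫ t in Ioi b, ψ t := by
    rw [← MeasureTheory.integral_const_mul, ← integral_add h2 (h3.const_mul _)]
    congr 1; funext t; ring
  rw [Jf, Jf, split (hψ.int_lin a) hab, h4, Phi]; ring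

lemma Jf_sub_le (hψ : Nice ψ) (hab : a ≤ b) :
    Jf ψ a - Jf ψ b ≤ (b - a) * Phi ψ a := by
  have h1 := Jf_sub hψ hab
  have h2 : (∫ t in Ioc a b, (t - a) * ψ t) ≤ ∫ t in Ioc a b, (b - a) * ψ t := by
    refine setIntegral_mono_on ((hψ.int_lin a).mono_set Ioc_subset_Ioi_self)
      ((hψ.integrable.integrableOn).const_mul _) measurableSet_Ioc fun t ht => ?_
    exact mul_le_mul_of_nonneg_right (by linarith [ht.2]) (hψ.nonneg t)
  rw [MeasureTheory.integral_const_mul, ← Phi_diff hψ hab] at h2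
  nlinarith [Phi_nonneg hψ b]

lemma Jf_sub_ge (hψ : Nice ψ) (hab : a ≤ b) :
    (b - a) * Phi ψ b ≤ Jf ψ a - Jf ψ b := by
  have h1 := Jf_sub hψ hab
  have h2 : 0 ≤ ∫ t in Ioc a b, (t - a) * ψ t :=
    setIntegral_nonneg measurableSet_Ioc fun t ht =>
      mul_nonneg (by linarith [ht.1]) (hψ.nonneg t)
  linarith

lemma Jf_anti (hψ : Nice ψ) : Antitone (Jf ψ) := fun a b hab => by
  have := Jf_sub_ge hψ hab
  have := mul_nonneg (sub_nonneg.2 hab) (Phi_nonneg hψ b)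
  linarith

lemma Jf_hasDerivAt (hψ : Nice ψ) (x : ℝ) : HasDerivAt (Jf ψ) (-(Phi ψ x)) x := by
  rw [hasDerivAt_iff_tendsto_slope]
  have hmin : Tendsto (fun y => min (-(Phi ψ x)) (-(Phi ψ y))) (nhdsWithin x {x}ᶜ)
      (nhds (-(Phi ψ x))) := by
    have : Tendsto (fun y => min (-(Phi ψ x)) (-(Phi ψ y))) (nhds x)
        (nhds (min (-(Phi ψ x)) (-(Phi ψ x)))) :=
      (continuous_const.min (Phi_cont hψ).neg).tendsto x
    rw [min_self] at this
    exact this.mono_left nhdsWithin_le_nhds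
  have hmax : Tendsto (fun y => max (-(Phi ψ x)) (-(Phi ψ y))) (nhdsWithin x {x}ᶜ)
      (nhds (-(Phi ψ x))) := by
    have : Tendsto (fun y => max (-(Phi ψ x)) (-(Phi ψ y))) (nhds x)
        (nhds (max (-(Phi ψ x)) (-(Phi ψ x)))) :=
      (continuous_const.max (Phi_cont hψ).neg).tendsto x
    rw [max_self] at this
    exact this.mono_left nhdsWithin_le_nhds
  refine tendsto_of_tendsto_of_tendsto_of_le_of_le' hmin hmax ?_ ?_
  · refine eventually_of_mem self_mem_nhdsWithin fun y (hy : y ≠ x) => ?_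
    rw [slope_def_field]
    rcases lt_or_gt_of_ne hy with hlt | hgt
    · have h1 := Jf_sub_le hψ hlt.le
      refine le_trans (min_le_right _ _) ?_
      rw [le_div_iff_of_neg (show y - x < 0 by linarith)]
      nlinarith
    · have h1 := Jf_sub_le hψ hgt.le
      refine le_trans (min_le_left _ _) ?_
      rw [le_div_iff₀ (show 0 < y - x by linarith)]
      nlinarith
  · refine eventually_of_mem self_mem_nhdsWithin fun y (hy : y ≠ x) => ?_
    rw [slope_def_field]
    rcases lt_or_gt_of_ne hy with hlt | hgt
    · have h1 := Jf_sub_ge hψ hlt.le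
      refine le_trans ?_ (le_max_left _ _)
      rw [div_le_iff_of_neg (show y - x < 0 by linarith)]
      nlinarith
    · have h1 := Jf_sub_ge hψ hgt.le
      refine le_trans ?_ (le_max_right _ _)
      rw [div_le_iff₀ (show 0 < y - x by linarith)]
      nlinarith

lemma Jf_cont (hψ : Nice ψ) : Continuous (Jf ψ) :=
  continuous_iff_continuousAt.2 fun x => (Jf_hasDerivAt hψ x).continuousAt

lemma Jf_tendsto (hψ : Nice ψ) : Tendsto (Jf ψ) atTop (nhds 0) := by
  have h3 := intervalIntegral_tendsto_integral_Ioi 0 hψ.int1.integrableOn tendsto_id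
  have h4 : ∀ᶠ b : ℝ in atTop,
      (∫ t in Ioi (0:ℝ), (1 + |t|) * ψ t) - ∫ t in (0:ℝ)..b, (1 + |t|) * ψ t
        = ∫ t in Ioi b, (1 + |t|) * ψ t := by
    filter_upwards [eventually_ge_atTop (0:ℝ)] with b hb
    rw [integral_of_le hb, split hψ.int1.integrableOn hb]; ring
  have h5 : Tendsto (fun b : ℝ =>
      (∫ t in Ioi (0:ℝ), (1 + |t|) * ψ t) - ∫ t in (0:ℝ)..b, (1 + |t|) * ψ t)
      atTop (nhds 0) := by
    have := (tendsto_const_nhds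
      (x := ∫ t in Ioi (0:ℝ), (1 + |t|) * ψ t) (f := atTop)).sub h3
    simpa using this
  have h2 : Tendsto (fun b => ∫ t in Ioi b, (1 + |t|) * ψ t) atTop (nhds 0) :=
    Tendsto.congr' h4 h5
  refine tendsto_of_tendsto_of_tendsto_of_le_of_le' tendsto_const_nhds h2
    (Eventually.of_forall fun b => Jf_nonneg hψ b) ?_
  filter_upwards [eventually_ge_atTop (0:ℝ)] with b hb
  refine setIntegral_mono_on (hψ.int_lin b) hψ.int1.integrableOn measurableSet_Ioi
    fun t ht => ?_
  have htb : b < t := ht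
  exact mul_le_mul_of_nonneg_right (by nlinarith [le_abs_self t]) (hψ.nonneg t)

lemma key {φ : ℝ → ℝ} (hφ : Nice φ) (x₀ : ℝ) (j : ℕ) (x : ℝ) (hx : x₀ ≤ x) :
    ∫ t in Ioi x, (t - x) * (φ t * (Jf φ t) ^ j)
      ≤ (Jf φ x) ^ (j + 1) / (j + 1) := by
  set ψ : ℝ → ℝ := fun t => φ t * (Jf φ (max t x₀)) ^ j with hψdef
  have hψmeas : AEStronglyMeasurable ψ volume :=
    hφ.meas.mul ((((Jf_cont hφ).comp (continuous_id.max continuous_const)).pow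
      j).aestronglyMeasurable)
  have hψ : Nice ψ := by
    refine ⟨hψmeas, fun t => mul_nonneg (hφ.nonneg t) (pow_nonneg (Jf_nonneg hφ _) j), ?_⟩
    refine ((hφ.int1.const_mul ((Jf φ x₀) ^ j)).mono'
      (((continuous_const.add continuous_abs).aestronglyMeasurable).mul hψmeas)
      (Eventually.of_forall fun t => ?_))
    have h1 : Jf φ (max t x₀) ≤ Jf φ x₀ := Jf_anti hφ (le_max_right t x₀)
    have h2 : (Jf φ (max t x₀)) ^ j ≤ (Jf φ x₀) ^ j :=
      pow_le_pow_left₀ (Jf_nonneg hφ _) h1 j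
    have h3 : 0 ≤ (1 + |t|) * φ t := by
      have := abs_nonneg t; have := hφ.nonneg t; nlinarith
    rw [Real.norm_eq_abs, abs_of_nonneg (mul_nonneg (by positivity)
      (mul_nonneg (hφ.nonneg t) (pow_nonneg (Jf_nonneg hφ _) j)))]
    calc (1 + |t|) * (φ t * Jf φ (max t x₀) ^ j)
        = ((1 + |t|) * φ t) * Jf φ (max t x₀) ^ j := by ring
      _ ≤ ((1 + |t|) * φ t) * (Jf φ x₀) ^ j := mul_le_mul_of_nonneg_left h2 h3
      _ = Jf φ x₀ ^ j * ((1 + |t|) * φ t) := by ring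
  have hJψx : ∀ y, x₀ ≤ y →
      Jf ψ y = ∫ t in Ioi y, (t - y) * (φ t * (Jf φ t) ^ j) := by
    intro y hy
    refine setIntegral_congr_fun measurableSet_Ioi fun t ht => ?_
    have : x₀ ≤ t := le_trans hy (le_of_lt ht)
    simp only [hψdef, max_eq_left this]
  set H : ℝ → ℝ := fun s => (Jf φ s) ^ (j + 1) / ((j : ℝ) + 1) with hHdef
  have hH : ∀ s : ℝ, HasDerivAt H (-((Jf φ s) ^ j * Phi φ s)) s := by
    intro s
    have h1 := ((Jf_hasDerivAt hφ s).pow (j + 1)).div_const ((j : ℝ) + 1)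
    convert h1 using 1
    have hj : ((j : ℝ) + 1) ≠ 0 := by positivity
    case e'_9 =>
      push_cast [Nat.add_sub_cancel]
      rw [eq_div_iff (by positivity)]
      ring
    all_goals rfl
  have hHcont : Continuous fun s => -((Jf φ s) ^ j * Phi φ s) :=
    (((Jf_cont hφ).pow j).mul (Phi_cont hφ)).neg
  have hH0 : ∀ s, 0 ≤ H s := fun s => by
    have := Jf_nonneg hφ s; positivity
  have main : ∀ b, x ≤ b → Jf ψ x ≤ H x + Jf ψ b := by
    intro b hb
    have e1 : ∫ s in x..b, -(Phi ψ s) = Jf ψ b - Jf ψ x :=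
      integral_eq_sub_of_hasDerivAt (fun s _ => Jf_hasDerivAt hψ s)
        ((Phi_cont hψ).neg.intervalIntegrable x b)
    have e2 : ∫ s in x..b, -((Jf φ s) ^ j * Phi φ s) = H b - H x :=
      integral_eq_sub_of_hasDerivAt (fun s _ => hH s)
        (hHcont.intervalIntegrable x b)
    have e3 : ∫ s in x..b, -((Jf φ s) ^ j * Phi φ s) ≤ ∫ s in x..b, -(Phi ψ s) := by
      refine intervalIntegral.integral_mono_on hb (hHcont.intervalIntegrable x b)
        ((Phi_cont hψ).neg.intervalIntegrable x b) fun s hs => ?_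
      have hsx : x ≤ s := hs.1
      have hsx₀ : x₀ ≤ s := le_trans hx hsx
      have comp : Phi ψ s ≤ (Jf φ s) ^ j * Phi φ s := by
        rw [Phi, Phi, ← MeasureTheory.integral_const_mul]
        refine setIntegral_mono_on hψ.integrable.integrableOn
          (hφ.integrable.integrableOn.const_mul _) measurableSet_Ioi fun t ht => ?_
        have hts : s < t := ht
        have hmax : max t x₀ = t := max_eq_left (le_trans hsx₀ hts.le)
        have h1 : Jf φ t ≤ Jf φ s := Jf_anti hφ hts.le
        have h2 : (Jf φ t) ^ j ≤ (Jf φ s) ^ j := pow_le_pow_left₀ (Jf_nonneg hφ _) h1 j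
        simp only [hψdef, hmax]
        calc φ t * Jf φ t ^ j ≤ φ t * Jf φ s ^ j :=
              mul_le_mul_of_nonneg_left h2 (hφ.nonneg t)
          _ = Jf φ s ^ j * φ t := by ring
      linarith
    rw [e1, e2] at e3
    have := hH0 b
    linarith
  have lim : Tendsto (fun b => H x + Jf ψ b) atTop (nhds (H x + 0)) :=
    tendsto_const_nhds.add (Jf_tendsto hψ)
  have hfin : Jf ψ x ≤ H x + 0 :=
    ge_of_tendsto lim (by filter_upwards [eventually_ge_atTop x] with b hb
                          exact main b hb)
  rw [← hJψx x hx]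
  simpa [hHdef] using hfin

end Stmt6Aux

open Stmt6Aux

/-- Gronwall-type bound for the modified Jost function. -/
theorem stmt_6 (V : ℝ → ℝ) (hV : MeasureTheory.Integrable (fun t => (1 + |t|) * |V t|))
    (x₀ : ℝ) (m : ℝ → ℂ) (h : ℝ → ℂ)
    (hm_cont : ContinuousOn m (Set.Ici x₀)) (hm_bdd : ∃ M, ∀ x ≥ x₀, ‖m x‖ ≤ M)
    (hh : ∀ u ≥ (0:ℝ), ‖h u‖ ≤ u)
    (heq : ∀ x ≥ x₀, m x = 1 + ∫ t in Set.Ioi x, h (t - x) * (V t : ℂ) * m t) :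
    (∀ x ≥ x₀, ‖m x‖ ≤ Real.exp (∫ t in Set.Ioi x, (t - x) * |V t|)) ∧
    ∃ C : ℝ, ∀ x ≥ x₀, ‖m x - 1‖ ≤ C * (1 + max 0 (-x)) := by
  classical
  set φ : ℝ → ℝ := fun t => |V t| with hφdef
  have hφmeas : AEStronglyMeasurable φ volume := by
    have hc : Continuous fun t : ℝ => (1 + |t|)⁻¹ :=
      ((continuous_const.add continuous_abs).inv₀ (fun t => (by positivity : (1:ℝ) + |t| ≠ 0)))
    refine (hc.aestronglyMeasurable.mul hV.aestronglyMeasurable).congr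
      (Eventually.of_forall fun t => ?_)
    have h1 : (1 + |t| : ℝ) ≠ 0 := by positivity
    show (1 + |t|)⁻¹ * ((1 + |t|) * |V t|) = |V t|
    rw [← mul_assoc, inv_mul_cancel₀ h1, one_mul]
  have hφ : Nice φ := ⟨hφmeas, fun t => abs_nonneg _, hV⟩
  obtain ⟨M₀, hM₀⟩ := hm_bdd
  have hM₀0 : 0 ≤ M₀ := le_trans (norm_nonneg _) (hM₀ x₀ le_rfl)
  set g : ℝ → ℝ := Jf φ with hgdef
  have hgeq : ∀ x : ℝ, (∫ t in Set.Ioi x, (t - x) * |V t|) = g x := fun x => rfl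
  have hganti : Antitone g := Jf_anti hφ
  have hgnon : ∀ x, 0 ≤ g x := Jf_nonneg hφ
  have hgcont : Continuous g := Jf_cont hφ
  -- the basic integral inequality
  have step : ∀ x, x₀ ≤ x → ∀ B : ℝ → ℝ, Continuous B → (∀ t, 0 ≤ B t) →
      (∀ t, x₀ ≤ t → ‖m t‖ ≤ B t) → (∀ t, x < t → B t ≤ B x) →
      ‖m x‖ ≤ 1 + ∫ t in Set.Ioi x, (t - x) * (φ t * B t) := by
    intro x hx B hBc hB0 hBm hBK
    have hint : IntegrableOn (fun t => (t - x) * (φ t * B t)) (Set.Ioi x) volume := by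
      refine (((hφ.int_lin x).const_mul (B x)).mono'
        (((continuous_id.sub continuous_const).aestronglyMeasurable.mul
          (hφ.meas.mul hBc.aestronglyMeasurable)).restrict)
        (ae_restrict_of_forall_mem measurableSet_Ioi fun t ht => ?_))
      have ht' : x < t := ht
      have h1 : 0 ≤ t - x := by linarith
      rw [Real.norm_eq_abs, abs_of_nonneg (mul_nonneg h1
        (mul_nonneg (hφ.nonneg t) (hB0 t)))]
      calc (t - x) * (φ t * B t) ≤ (t - x) * (φ t * B x) := by
            exact mul_le_mul_of_nonneg_left
              (mul_le_mul_of_nonneg_left (hBK t ht') (hφ.nonneg t)) h1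
        _ = B x * ((t - x) * φ t) := by ring
    have hnorm : ∀ t, x < t →
        ‖h (t - x) * (V t : ℂ) * m t‖ ≤ (t - x) * (φ t * B t) := by
      intro t ht
      have e1 : ‖h (t - x)‖ ≤ t - x := hh _ (by linarith)
      have e2 : ‖m t‖ ≤ B t := hBm t (by linarith)
      calc ‖h (t - x) * (V t : ℂ) * m t‖ = ‖h (t - x)‖ * |V t| * ‖m t‖ := by
            rw [norm_mul, norm_mul, Complex.norm_real, Real.norm_eq_abs]
        _ ≤ (t - x) * |V t| * B t := by
            refine mul_le_mul (mul_le_mul e1 le_rfl (abs_nonneg _) (by linarith)) e2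
              (norm_nonneg _) (mul_nonneg (by linarith) (abs_nonneg _))
        _ = (t - x) * (φ t * B t) := by simp only [hφdef]; ring
    have hbound : ‖∫ t in Set.Ioi x, h (t - x) * (V t : ℂ) * m t‖
        ≤ ∫ t in Set.Ioi x, (t - x) * (φ t * B t) := by
      refine le_trans (MeasureTheory.norm_integral_le_integral_norm _) ?_
      refine integral_mono_of_nonneg (Eventually.of_forall fun t => norm_nonneg _)
        hint (ae_restrict_of_forall_mem measurableSet_Ioi fun t ht => hnorm t ht)
    calc ‖m x‖ = ‖1 + ∫ t in Set.Ioi x, h (t - x) * (V t : ℂ) * m t‖ := by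
          rw [heq x hx]
      _ ≤ ‖(1:ℂ)‖ + ‖∫ t in Set.Ioi x, h (t - x) * (V t : ℂ) * m t‖ := norm_add_le _ _
      _ ≤ 1 + ∫ t in Set.Ioi x, (t - x) * (φ t * B t) := by
          rw [norm_one]; linarith
  -- per-term integrability
  have hterm : ∀ (x : ℝ) (j : ℕ),
      IntegrableOn (fun t => (t - x) * (φ t * g t ^ j)) (Set.Ioi x) volume := by
    intro x j
    refine (((hφ.int_lin x).const_mul (g x ^ j)).mono'
      (((continuous_id.sub continuous_const).aestronglyMeasurable.mul
        (hφ.meas.mul ((hgcont.pow j).aestronglyMeasurable))).restrict)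
      (ae_restrict_of_forall_mem measurableSet_Ioi fun t ht => ?_))
    have ht' : x < t := ht
    have h1 : 0 ≤ t - x := by linarith
    have h2 : g t ^ j ≤ g x ^ j := pow_le_pow_left₀ (hgnon t) (hganti ht'.le) j
    rw [Real.norm_eq_abs, abs_of_nonneg (mul_nonneg h1
      (mul_nonneg (hφ.nonneg t) (pow_nonneg (hgnon t) j)))]
    calc (t - x) * (φ t * g t ^ j) ≤ (t - x) * (φ t * g x ^ j) :=
          mul_le_mul_of_nonneg_left (mul_le_mul_of_nonneg_left h2 (hφ.nonneg t)) h1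
      _ = g x ^ j * ((t - x) * φ t) := by ring
  -- the inductive estimate
  have induct : ∀ n : ℕ, ∀ x, x₀ ≤ x →
      ‖m x‖ ≤ (∑ j ∈ Finset.range n, g x ^ j / (Nat.factorial j : ℝ))
        + M₀ * g x ^ n / (Nat.factorial n : ℝ) := by
    intro n
    induction n with
    | zero => intro x hx; simpa using hM₀ x hx
    | succ n ih =>
      intro x hx
      set B : ℝ → ℝ := fun t => (∑ j ∈ Finset.range n, g t ^ j / (Nat.factorial j : ℝ))
        + M₀ * g t ^ n / (Nat.factorial n : ℝ) with hBdef
      have hBc : Continuous B := by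
        refine (continuous_finset_sum _ fun j _ => (hgcont.pow j).div_const _).add
          ((continuous_const.mul (hgcont.pow n)).div_const _)
      have hB0 : ∀ t, 0 ≤ B t := fun t =>
        add_nonneg (Finset.sum_nonneg fun j _ =>
          div_nonneg (pow_nonneg (hgnon t) j) (Nat.cast_nonneg _))
          (div_nonneg (mul_nonneg hM₀0 (pow_nonneg (hgnon t) n)) (Nat.cast_nonneg _))
      have hBK : ∀ t, x < t → B t ≤ B x := by
        intro t ht
        have hg : g t ≤ g x := hganti ht.le
        have hgt0 : (0:ℝ) ≤ g t := hgnon t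
        simp only [hBdef]
        gcongr <;> first | exact hgt0 | exact hg | exact hM₀0 | positivity
      have h1 := step x hx B hBc hB0 ih hBK
      have hfun : ∀ t : ℝ, (t - x) * (φ t * B t)
          = (∑ j ∈ Finset.range n,
              ((t - x) * (φ t * g t ^ j)) * ((Nat.factorial j : ℝ))⁻¹)
            + ((t - x) * (φ t * g t ^ n)) * (M₀ * ((Nat.factorial n : ℝ))⁻¹) := by
        intro t
        rw [hBdef]
        have e1 : ∀ j ∈ Finset.range n,
            (t - x) * (φ t * g t ^ j) * ((Nat.factorial j : ℝ))⁻¹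
              = (t - x) * φ t * (g t ^ j / (Nat.factorial j : ℝ)) := fun j _ => by ring
        rw [Finset.sum_congr rfl e1, ← Finset.mul_sum]
        ring
      have hsum_int : IntegrableOn (fun t => ∑ j ∈ Finset.range n,
          ((t - x) * (φ t * g t ^ j)) * ((Nat.factorial j : ℝ))⁻¹) (Set.Ioi x) volume :=
        integrable_finset_sum _ fun j _ => (hterm x j).mul_const _
      have hsplit : (∫ t in Set.Ioi x, (t - x) * (φ t * B t))
          = (∑ j ∈ Finset.range n,
              (∫ t in Set.Ioi x, (t - x) * (φ t * g t ^ j)) * ((Nat.factorial j : ℝ))⁻¹)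
            + (∫ t in Set.Ioi x, (t - x) * (φ t * g t ^ n))
              * (M₀ * ((Nat.factorial n : ℝ))⁻¹) := by
        simp only [hfun]
        rw [integral_add hsum_int ((hterm x n).mul_const _),
          integral_finset_sum _ fun j _ => (hterm x j).mul_const _]
        simp only [MeasureTheory.integral_mul_const]
      have hkey : ∀ j : ℕ, (∫ t in Set.Ioi x, (t - x) * (φ t * g t ^ j))
          ≤ g x ^ (j + 1) / ((j : ℝ) + 1) := fun j => key hφ x₀ j x hx
      have htarget : (∑ j ∈ Finset.range (n + 1), g x ^ j / (Nat.factorial j : ℝ))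
          + M₀ * g x ^ (n + 1) / (Nat.factorial (n + 1) : ℝ)
          = 1 + ((∑ j ∈ Finset.range n,
              (g x ^ (j + 1) / ((j : ℝ) + 1)) * ((Nat.factorial j : ℝ))⁻¹)
            + (g x ^ (n + 1) / ((n : ℝ) + 1)) * (M₀ * ((Nat.factorial n : ℝ))⁻¹)) := by
        rw [Finset.sum_range_succ']
        have e0 : ∀ j : ℕ, g x ^ (j + 1) / (Nat.factorial (j + 1) : ℝ)
            = (g x ^ (j + 1) / ((j : ℝ) + 1)) * ((Nat.factorial j : ℝ))⁻¹ := by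
          intro j
          rw [Nat.factorial_succ]
          push_cast
          have h1 : ((j : ℝ) + 1) ≠ 0 := by positivity
          have h2 : ((Nat.factorial j : ℝ)) ≠ 0 :=
            Nat.cast_ne_zero.2 (Nat.factorial_ne_zero j)
          field_simp
        have e1 : M₀ * g x ^ (n + 1) / (Nat.factorial (n + 1) : ℝ)
            = g x ^ (n + 1) / ((n : ℝ) + 1) * (M₀ * ((Nat.factorial n : ℝ))⁻¹) := by
          rw [Nat.factorial_succ]
          push_cast
          have h1 : ((n : ℝ) + 1) ≠ 0 := by positivity
          have h2 : ((Nat.factorial n : ℝ)) ≠ 0 :=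
            Nat.cast_ne_zero.2 (Nat.factorial_ne_zero n)
          field_simp
        rw [Finset.sum_congr rfl fun j _ => e0 j, e1]
        simp [Nat.factorial_zero]
        ring
      calc ‖m x‖ ≤ 1 + ∫ t in Set.Ioi x, (t - x) * (φ t * B t) := h1
        _ = 1 + ((∑ j ∈ Finset.range n,
              (∫ t in Set.Ioi x, (t - x) * (φ t * g t ^ j)) * ((Nat.factorial j : ℝ))⁻¹)
            + (∫ t in Set.Ioi x, (t - x) * (φ t * g t ^ n))
              * (M₀ * ((Nat.factorial n : ℝ))⁻¹)) := by rw [hsplit]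
        _ ≤ 1 + ((∑ j ∈ Finset.range n,
              (g x ^ (j + 1) / ((j : ℝ) + 1)) * ((Nat.factorial j : ℝ))⁻¹)
            + (g x ^ (n + 1) / ((n : ℝ) + 1)) * (M₀ * ((Nat.factorial n : ℝ))⁻¹)) := by
            gcongr <;> first
              | exact hkey _
              | exact mul_nonneg hM₀0 (by positivity)
              | positivity
        _ = _ := htarget.symm
  -- part 1
  have part1 : ∀ x ≥ x₀, ‖m x‖ ≤ Real.exp (g x) := by
    intro x hx
    have hb : ∀ n : ℕ, ‖m x‖ ≤ Real.exp (g x) + M₀ * (g x ^ n / (Nat.factorial n : ℝ)) := by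
      intro n
      refine le_trans (induct n x hx) ?_
      have := Real.sum_le_exp_of_nonneg (hgnon x) n
      have h2 : M₀ * g x ^ n / (Nat.factorial n : ℝ)
          = M₀ * (g x ^ n / (Nat.factorial n : ℝ)) := by ring
      linarith [this]
    have lim : Tendsto (fun n : ℕ => Real.exp (g x)
        + M₀ * (g x ^ n / (Nat.factorial n : ℝ))) atTop
        (nhds (Real.exp (g x) + M₀ * 0)) :=
      tendsto_const_nhds.add
        ((FloorSemiring.tendsto_pow_div_factorial_atTop (g x)).const_mul M₀)
    have := ge_of_tendsto lim (Eventually.of_forall hb)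
    simpa using this
  constructor
  · intro x hx
    rw [hgeq x]
    exact part1 x hx
  -- part 2
  · refine ⟨Real.exp (g x₀) * ∫ t, (1 + |t|) * φ t, fun x hx => ?_⟩
    have hE : ∀ t, x < t → ‖m t‖ ≤ Real.exp (g x₀) := by
      intro t ht
      refine le_trans (part1 t (by linarith)) (Real.exp_le_exp.2 (hganti (by linarith)))
    have hm1 : m x - 1 = ∫ t in Set.Ioi x, h (t - x) * (V t : ℂ) * m t := by
      rw [heq x hx]; ring
    have hb1 : ‖m x - 1‖ ≤ ∫ t in Set.Ioi x, Real.exp (g x₀) * ((t - x) * φ t) := by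
      rw [hm1]
      refine le_trans (MeasureTheory.norm_integral_le_integral_norm _) ?_
      refine integral_mono_of_nonneg (Eventually.of_forall fun t => norm_nonneg _)
        ((hφ.int_lin x).const_mul _)
        (ae_restrict_of_forall_mem measurableSet_Ioi fun t ht => ?_)
      have ht' : x < t := ht
      have e1 : ‖h (t - x)‖ ≤ t - x := hh _ (by linarith)
      calc ‖h (t - x) * (V t : ℂ) * m t‖ = ‖h (t - x)‖ * |V t| * ‖m t‖ := by
            rw [norm_mul, norm_mul, Complex.norm_real, Real.norm_eq_abs]
        _ ≤ (t - x) * |V t| * Real.exp (g x₀) := by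
            refine mul_le_mul (mul_le_mul e1 le_rfl (abs_nonneg _) (by linarith))
              (hE t ht') (norm_nonneg _) (mul_nonneg (by linarith) (abs_nonneg _))
        _ = Real.exp (g x₀) * ((t - x) * φ t) := by simp only [hφdef]; ring
    rw [MeasureTheory.integral_const_mul] at hb1
    have hb2 : g x ≤ (1 + max 0 (-x)) * ∫ t, (1 + |t|) * φ t := by
      have s1 : g x ≤ ∫ t in Set.Ioi x, (1 + max 0 (-x)) * ((1 + |t|) * φ t) := by
        refine setIntegral_mono_on (hφ.int_lin x)
          ((hφ.int1.const_mul _).integrableOn) measurableSet_Ioi fun t ht => ?_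
        have ht' : x < t := ht
        have f1 := le_abs_self t
        have f2 : -x ≤ max 0 (-x) := le_max_right _ _
        have f3 : (0:ℝ) ≤ max 0 (-x) := le_max_left _ _
        have f4 := abs_nonneg t
        have key2 : t - x ≤ (1 + max 0 (-x)) * (1 + |t|) := by
          nlinarith [mul_nonneg f3 f4]
        calc (t - x) * φ t ≤ ((1 + max 0 (-x)) * (1 + |t|)) * φ t :=
              mul_le_mul_of_nonneg_right key2 (hφ.nonneg t)
          _ = (1 + max 0 (-x)) * ((1 + |t|) * φ t) := by ring
      rw [MeasureTheory.integral_const_mul] at s1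
      have s2 : (∫ t in Set.Ioi x, (1 + |t|) * φ t) ≤ ∫ t, (1 + |t|) * φ t := by
        refine setIntegral_le_integral hφ.int1 (Eventually.of_forall fun t => ?_)
        exact mul_nonneg (by positivity) (hφ.nonneg t)
      have f3 : (0:ℝ) ≤ 1 + max 0 (-x) := by positivity
      calc g x ≤ (1 + max 0 (-x)) * ∫ t in Set.Ioi x, (1 + |t|) * φ t := s1
        _ ≤ (1 + max 0 (-x)) * ∫ t, (1 + |t|) * φ t := mul_le_mul_of_nonneg_left s2 f3
    calc ‖m x - 1‖ ≤ Real.exp (g x₀) * g x := hb1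
      _ ≤ Real.exp (g x₀) * ((1 + max 0 (-x)) * ∫ t, (1 + |t|) * φ t) :=
          mul_le_mul_of_nonneg_left hb2 (Real.exp_nonneg _)
      _ = (Real.exp (g x₀) * ∫ t, (1 + |t|) * φ t) * (1 + max 0 (-x)) := by ring
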